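/- Let f : ℝ → ℝ → ℝ satisfy |f(t,u₁) − f(t,u₂)| ≤ L|u₁ − u₂| for all t, u₁, u₂, with L ≥ 0. With the notation of the three-stage RBF Runge–Kutta stages (h ≥ 0, c₂ ≥ 0, c₃, a₃₁, a₃₂, e₂, e₃ ∈ ℝ, E₂ = exp(−e₂c₂²h²), E₃ = exp(−e₃c₃²h²), k₁(w) = f(t,w), k₂(w) = f(t + c₂h, wE₂ + hc₂k₁(w)), k₃(w) = f(t + c₃h, wE₃ + h(a₃₁k₁(w) + a₃₂k₂(w)))), define the one-step map Φ(w) = w + h(b₁k₁(w) + b₂k₂(w) + b₃k₃(w)). Then for all w₁, w₂ ∈ ℝ, |Φ(w₁) − Φ(w₂)| ≤ φ·|w₁ − w₂|, where φ = 1 + (|b₁| + |b₂|E₂ + |b₃|E₃)hL + (|b₂|c₂ + |b₃||a₃₁| + |b₃||a₃₂|E₂)h²L² + |b₃||a₃₂|c₂h³L³. -/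
import Mathlib


/-- Lipschitz bound (amplification factor) for the one-step map of the
three-stage RBF Runge–Kutta method. -/
theorem stmt_6 (f : ℝ → ℝ → ℝ) (L : ℝ) (hL : 0 ≤ L)
    (hf : ∀ t u₁ u₂ : ℝ, |f t u₁ - f t u₂| ≤ L * |u₁ - u₂|)
    (t h c₂ c₃ a₃₁ a₃₂ b₁ b₂ b₃ e₂ e₃ E₂ E₃ : ℝ) (hh : 0 ≤ h) (hc₂ : 0 ≤ c₂)
    (hE₂ : E₂ = Real.exp (-e₂ * c₂ ^ 2 * h ^ 2))
    (hE₃ : E₃ = Real.exp (-e₃ * c₃ ^ 2 * h ^ 2))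
    (k₁ k₂ k₃ Φ : ℝ → ℝ)
    (hk₁ : ∀ w, k₁ w = f t w)
    (hk₂ : ∀ w, k₂ w = f (t + c₂ * h) (w * E₂ + h * c₂ * k₁ w))
    (hk₃ : ∀ w, k₃ w = f (t + c₃ * h) (w * E₃ + h * (a₃₁ * k₁ w + a₃₂ * k₂ w)))
    (hΦ : ∀ w, Φ w = w + h * (b₁ * k₁ w + b₂ * k₂ w + b₃ * k₃ w)) :
    ∀ w₁ w₂ : ℝ,
      |Φ w₁ - Φ w₂|
        ≤ (1 + (|b₁| + |b₂| * E₂ + |b₃| * E₃) * h * L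
            + (|b₂| * c₂ + |b₃| * |a₃₁| + |b₃| * |a₃₂| * E₂) * h ^ 2 * L ^ 2
            + |b₃| * |a₃₂| * c₂ * h ^ 3 * L ^ 3) * |w₁ - w₂| := by
  intro w₁ w₂
  have hE₂pos : 0 < E₂ := hE₂ ▸ Real.exp_pos _
  have hE₃pos : 0 < E₃ := hE₃ ▸ Real.exp_pos _
  set Δ := |w₁ - w₂| with hΔ
  have hΔ0 : 0 ≤ Δ := abs_nonneg _
  -- bound on k₁
  have h1 : |k₁ w₁ - k₁ w₂| ≤ L * Δ := by
    rw [hk₁, hk₁]; exact hf t w₁ w₂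
  -- bound on k₂
  have h2 : |k₂ w₁ - k₂ w₂| ≤ L * E₂ * Δ + h * c₂ * L ^ 2 * Δ := by
    rw [hk₂, hk₂]
    calc |f (t + c₂ * h) (w₁ * E₂ + h * c₂ * k₁ w₁)
          - f (t + c₂ * h) (w₂ * E₂ + h * c₂ * k₁ w₂)|
        ≤ L * |(w₁ * E₂ + h * c₂ * k₁ w₁) - (w₂ * E₂ + h * c₂ * k₁ w₂)| := hf _ _ _
      _ ≤ L * (|(w₁ - w₂) * E₂| + |h * c₂ * (k₁ w₁ - k₁ w₂)|) := by
          apply mul_le_mul_of_nonneg_left _ hL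
          calc |(w₁ * E₂ + h * c₂ * k₁ w₁) - (w₂ * E₂ + h * c₂ * k₁ w₂)|
              = |(w₁ - w₂) * E₂ + h * c₂ * (k₁ w₁ - k₁ w₂)| := by ring_nf
            _ ≤ _ := abs_add_le _ _
      _ ≤ L * (Δ * E₂ + h * c₂ * (L * Δ)) := by
          apply mul_le_mul_of_nonneg_left _ hL
          rw [abs_mul, abs_mul, abs_mul, abs_of_pos hE₂pos, abs_of_nonneg hh,
            abs_of_nonneg hc₂]
          have := mul_le_mul_of_nonneg_left h1 (mul_nonneg hh hc₂)
          linarith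
      _ = L * E₂ * Δ + h * c₂ * L ^ 2 * Δ := by ring
  -- bound on k₃
  have h3 : |k₃ w₁ - k₃ w₂|
      ≤ L * E₃ * Δ + h * |a₃₁| * L ^ 2 * Δ + h * |a₃₂| * L ^ 2 * E₂ * Δ
        + h ^ 2 * |a₃₂| * c₂ * L ^ 3 * Δ := by
    rw [hk₃, hk₃]
    have habs : |(w₁ * E₃ + h * (a₃₁ * k₁ w₁ + a₃₂ * k₂ w₁))
        - (w₂ * E₃ + h * (a₃₁ * k₁ w₂ + a₃₂ * k₂ w₂))|
        ≤ Δ * E₃ + h * |a₃₁| * |k₁ w₁ - k₁ w₂| + h * |a₃₂| * |k₂ w₁ - k₂ w₂| := by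
      calc |(w₁ * E₃ + h * (a₃₁ * k₁ w₁ + a₃₂ * k₂ w₁))
          - (w₂ * E₃ + h * (a₃₁ * k₁ w₂ + a₃₂ * k₂ w₂))|
          = |(w₁ - w₂) * E₃ + (h * a₃₁ * (k₁ w₁ - k₁ w₂)
              + h * a₃₂ * (k₂ w₁ - k₂ w₂))| := by ring_nf
        _ ≤ |(w₁ - w₂) * E₃| + |h * a₃₁ * (k₁ w₁ - k₁ w₂)
              + h * a₃₂ * (k₂ w₁ - k₂ w₂)| := abs_add_le _ _
        _ ≤ |(w₁ - w₂) * E₃| + (|h * a₃₁ * (k₁ w₁ - k₁ w₂)|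
              + |h * a₃₂ * (k₂ w₁ - k₂ w₂)|) := by
            have := abs_add_le (h * a₃₁ * (k₁ w₁ - k₁ w₂)) (h * a₃₂ * (k₂ w₁ - k₂ w₂))
            linarith
        _ = Δ * E₃ + h * |a₃₁| * |k₁ w₁ - k₁ w₂| + h * |a₃₂| * |k₂ w₁ - k₂ w₂| := by
            rw [abs_mul, abs_mul, abs_mul, abs_mul, abs_mul, abs_of_pos hE₃pos,
              abs_of_nonneg hh]; ring
    calc |f (t + c₃ * h) (w₁ * E₃ + h * (a₃₁ * k₁ w₁ + a₃₂ * k₂ w₁))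
        - f (t + c₃ * h) (w₂ * E₃ + h * (a₃₁ * k₁ w₂ + a₃₂ * k₂ w₂))|
        ≤ L * |(w₁ * E₃ + h * (a₃₁ * k₁ w₁ + a₃₂ * k₂ w₁))
            - (w₂ * E₃ + h * (a₃₁ * k₁ w₂ + a₃₂ * k₂ w₂))| := hf _ _ _
      _ ≤ L * (Δ * E₃ + h * |a₃₁| * (L * Δ)
            + h * |a₃₂| * (L * E₂ * Δ + h * c₂ * L ^ 2 * Δ)) := by
          apply mul_le_mul_of_nonneg_left _ hL
          have t1 := mul_le_mul_of_nonneg_left h1 (mul_nonneg hh (abs_nonneg a₃₁))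
          have t2 := mul_le_mul_of_nonneg_left h2 (mul_nonneg hh (abs_nonneg a₃₂))
          linarith
      _ = L * E₃ * Δ + h * |a₃₁| * L ^ 2 * Δ + h * |a₃₂| * L ^ 2 * E₂ * Δ
            + h ^ 2 * |a₃₂| * c₂ * L ^ 3 * Δ := by ring
  -- combine
  have hmain : |Φ w₁ - Φ w₂|
      ≤ Δ + h * |b₁| * |k₁ w₁ - k₁ w₂| + h * |b₂| * |k₂ w₁ - k₂ w₂|
        + h * |b₃| * |k₃ w₁ - k₃ w₂| := by
    rw [hΦ, hΦ]
    calc |(w₁ + h * (b₁ * k₁ w₁ + b₂ * k₂ w₁ + b₃ * k₃ w₁))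
        - (w₂ + h * (b₁ * k₁ w₂ + b₂ * k₂ w₂ + b₃ * k₃ w₂))|
        = |(w₁ - w₂) + (h * b₁ * (k₁ w₁ - k₁ w₂) + h * b₂ * (k₂ w₁ - k₂ w₂)
            + h * b₃ * (k₃ w₁ - k₃ w₂))| := by ring_nf
      _ ≤ |w₁ - w₂| + |h * b₁ * (k₁ w₁ - k₁ w₂) + h * b₂ * (k₂ w₁ - k₂ w₂)
            + h * b₃ * (k₃ w₁ - k₃ w₂)| := abs_add_le _ _
      _ ≤ Δ + (|h * b₁ * (k₁ w₁ - k₁ w₂)| + |h * b₂ * (k₂ w₁ - k₂ w₂)|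
            + |h * b₃ * (k₃ w₁ - k₃ w₂)|) := by
          have := abs_add_le (h * b₁ * (k₁ w₁ - k₁ w₂) + h * b₂ * (k₂ w₁ - k₂ w₂))
            (h * b₃ * (k₃ w₁ - k₃ w₂))
          have := abs_add_le (h * b₁ * (k₁ w₁ - k₁ w₂)) (h * b₂ * (k₂ w₁ - k₂ w₂))
          linarith
      _ = Δ + h * |b₁| * |k₁ w₁ - k₁ w₂| + h * |b₂| * |k₂ w₁ - k₂ w₂|
            + h * |b₃| * |k₃ w₁ - k₃ w₂| := by
          simp only [abs_mul, abs_of_nonneg hh]; ring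
  have t1 := mul_le_mul_of_nonneg_left h1 (mul_nonneg hh (abs_nonneg b₁))
  have t2 := mul_le_mul_of_nonneg_left h2 (mul_nonneg hh (abs_nonneg b₂))
  have t3 := mul_le_mul_of_nonneg_left h3 (mul_nonneg hh (abs_nonneg b₃))
  have hfinal : Δ + h * |b₁| * (L * Δ)
      + h * |b₂| * (L * E₂ * Δ + h * c₂ * L ^ 2 * Δ)
      + h * |b₃| * (L * E₃ * Δ + h * |a₃₁| * L ^ 2 * Δ + h * |a₃₂| * L ^ 2 * E₂ * Δ
        + h ^ 2 * |a₃₂| * c₂ * L ^ 3 * Δ)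
      = (1 + (|b₁| + |b₂| * E₂ + |b₃| * E₃) * h * L
          + (|b₂| * c₂ + |b₃| * |a₃₁| + |b₃| * |a₃₂| * E₂) * h ^ 2 * L ^ 2
          + |b₃| * |a₃₂| * c₂ * h ^ 3 * L ^ 3) * Δ := by ring
  linarith
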